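/- arXiv:1802.05535 — 5 statements merged into one kernel-verified Lean document; each statement's English description precedes it below -/
import Mathlib

section
/- Let x : ℕ → (ℝ → ℝ) satisfy the recursive linear ODEs x_j'(ρ) = x_{j-1}(ρ) - x_j(ρ) for all j > i, where x_i : ℝ → ℝ is a given continuous function. Then for each j > i, x_j(ρ) = e^{-ρ}·Σ_{k=i+1}^{j} (ρ^{j-k}/(j-k)!)·x_k(0) + (1/(j-(i+1))!)·∫_0^ρ x_i(ρ-s)·s^{j-(i+1)}·e^{-s} ds. -/
set_option maxHeartbeats 1000000

open Finset intervalIntegral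

namespace Stmt3Aux

open MeasureTheory Set Real

noncomputable def G (f : ℝ → ℝ) (k : ℕ) (ρ : ℝ) : ℝ :=
  ∫ u in (0:ℝ)..ρ, f u * u ^ k * Real.exp u

noncomputable def H (f : ℝ → ℝ) (m : ℕ) (ρ : ℝ) : ℝ :=
  ∫ u in (0:ℝ)..ρ, f u * (ρ - u) ^ m * Real.exp u

variable {f : ℝ → ℝ}

lemma contOn_piece (hf : ContinuousOn f (Set.Ici 0)) (k : ℕ) :
    ContinuousOn (fun u => f u * u ^ k * Real.exp u) (Set.Ici 0) :=
  (hf.mul (continuous_pow k).continuousOn).mul Real.continuous_exp.continuousOn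

lemma uIcc_sub {a b : ℝ} (ha : 0 ≤ a) (hb : 0 ≤ b) : Set.uIcc a b ⊆ Set.Ici 0 :=
  fun x hx => le_trans (le_inf ha hb) hx.1

lemma intble (hf : ContinuousOn f (Set.Ici 0)) (k : ℕ) {a b : ℝ} (ha : 0 ≤ a) (hb : 0 ≤ b) :
    IntervalIntegrable (fun u => f u * u ^ k * Real.exp u) MeasureTheory.volume a b :=
  ((contOn_piece hf k).mono (uIcc_sub ha hb)).intervalIntegrable

lemma G_cont (hf : ContinuousOn f (Set.Ici 0)) (k : ℕ) {T : ℝ} (hT : 0 ≤ T) :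
    ContinuousOn (G f k) (Set.Icc 0 T) := by
  have h : MeasureTheory.IntegrableOn (fun u => f u * u ^ k * Real.exp u)
      (Set.uIcc (0:ℝ) T) MeasureTheory.volume := by
    rw [Set.uIcc_of_le hT]
    exact ((contOn_piece hf k).mono (by rw [← Set.uIcc_of_le hT]; exact uIcc_sub le_rfl hT)).integrableOn_Icc
  have := intervalIntegral.continuousOn_primitive_interval h
  rwa [Set.uIcc_of_le hT] at this

lemma G_deriv (hf : ContinuousOn f (Set.Ici 0)) (k : ℕ) {ρ : ℝ} (hρ : 0 < ρ) :
    HasDerivAt (G f k) (f ρ * ρ ^ k * Real.exp ρ) ρ := by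
  apply intervalIntegral.integral_hasDerivAt_right (intble hf k le_rfl hρ.le)
  · exact ((contOn_piece hf k).mono (Set.Ioi_subset_Ici le_rfl)).stronglyMeasurableAtFilter
      isOpen_Ioi ρ hρ
  · exact (contOn_piece hf k ρ hρ.le).continuousAt (Ici_mem_nhds hρ)

lemma H_eq (hf : ContinuousOn f (Set.Ici 0)) (m : ℕ) {ρ : ℝ} (hρ : 0 ≤ ρ) :
    H f m ρ = ∑ p ∈ Finset.range (m + 1),
      (-1 : ℝ) ^ (p + m) * (m.choose p : ℝ) * ρ ^ p * G f (m - p) ρ := by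
  unfold H G
  have hpt : ∀ u ∈ Set.uIcc (0:ℝ) ρ, f u * (ρ - u) ^ m * Real.exp u =
      ∑ p ∈ Finset.range (m + 1),
        (-1 : ℝ) ^ (p + m) * (m.choose p : ℝ) * ρ ^ p * (f u * u ^ (m - p) * Real.exp u) := by
    intro u _
    rw [sub_pow, Finset.mul_sum, Finset.sum_mul]
    refine Finset.sum_congr rfl fun p _ => by ring
  rw [intervalIntegral.integral_congr hpt,
    intervalIntegral.integral_finset_sum (fun p _ =>
      ((intble hf (m - p) le_rfl hρ).const_mul _))]
  refine Finset.sum_congr rfl fun p _ => ?_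
  rw [intervalIntegral.integral_const_mul]

lemma H_cont (hf : ContinuousOn f (Set.Ici 0)) (m : ℕ) {T : ℝ} (hT : 0 ≤ T) :
    ContinuousOn (H f m) (Set.Icc 0 T) := by
  refine ContinuousOn.congr (f := fun ρ => ∑ p ∈ Finset.range (m + 1),
      (-1 : ℝ) ^ (p + m) * (m.choose p : ℝ) * ρ ^ p * G f (m - p) ρ) ?_ ?_
  · apply continuousOn_finset_sum
    intro p _
    exact ((continuousOn_const.mul (continuous_pow p).continuousOn).mul (G_cont hf (m - p) hT))
  · intro ρ hρ
    exact H_eq hf m hρ.1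

lemma alt_sum_zero (m : ℕ) :
    ∑ p ∈ Finset.range (m + 2), (-1 : ℝ) ^ (p + (m + 1)) * ((m+1).choose p : ℝ) = 0 := by
  have h0 : ∑ p ∈ Finset.range (m + 2), ((-1 : ℤ) ^ p * ((m+1).choose p : ℤ)) = 0 :=
    Int.alternating_sum_range_choose_of_ne (Nat.succ_ne_zero m)
  have h1 : ∑ p ∈ Finset.range (m + 2), ((-1 : ℝ) ^ p * ((m+1).choose p : ℝ)) = 0 := by
    exact_mod_cast h0
  calc ∑ p ∈ Finset.range (m + 2), (-1 : ℝ) ^ (p + (m + 1)) * ((m+1).choose p : ℝ)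
      = (-1 : ℝ) ^ (m + 1) * ∑ p ∈ Finset.range (m + 2),
          ((-1 : ℝ) ^ p * ((m+1).choose p : ℝ)) := by
        rw [Finset.mul_sum]; refine Finset.sum_congr rfl fun p _ => by rw [pow_add]; ring
    _ = 0 := by rw [h1, mul_zero]

lemma H_deriv (hf : ContinuousOn f (Set.Ici 0)) (m : ℕ) {ρ : ℝ} (hρ : 0 < ρ) :
    HasDerivAt (H f (m + 1)) (((m : ℝ) + 1) * H f m ρ) ρ := by
  set S : ℝ → ℝ := fun t => ∑ p ∈ Finset.range (m + 2),
    (-1 : ℝ) ^ (p + (m + 1)) * ((m+1).choose p : ℝ) * t ^ p * G f (m + 1 - p) t with hSdef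
  have hS : HasDerivAt S (∑ p ∈ Finset.range (m + 2),
      ((-1 : ℝ) ^ (p + (m + 1)) * ((m+1).choose p : ℝ) * ((p : ℝ) * ρ ^ (p - 1)) * G f (m + 1 - p) ρ
        + (-1 : ℝ) ^ (p + (m + 1)) * ((m+1).choose p : ℝ) * ρ ^ (m + 1) * (f ρ * Real.exp ρ))) ρ := by
    apply HasDerivAt.fun_sum
    intro p hp
    have hple : p ≤ m + 1 := by
      have := Finset.mem_range.mp hp; omega
    have h1 : HasDerivAt (fun t : ℝ => t ^ p) ((p : ℝ) * ρ ^ (p - 1)) ρ := hasDerivAt_pow p ρ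
    have h2 := G_deriv hf (m + 1 - p) hρ
    have h3 : HasDerivAt (fun t : ℝ => (-1 : ℝ) ^ (p + (m + 1)) * ((m+1).choose p : ℝ) *
        (t ^ p * G f (m + 1 - p) t))
        ((-1 : ℝ) ^ (p + (m + 1)) * ((m+1).choose p : ℝ) *
          ((p : ℝ) * ρ ^ (p - 1) * G f (m + 1 - p) ρ + ρ ^ p * (f ρ * ρ ^ (m + 1 - p) * Real.exp ρ))) ρ :=
      (h1.mul h2).const_mul ((-1 : ℝ) ^ (p + (m + 1)) * ((m+1).choose p : ℝ))
    have hpow : ρ ^ p * ρ ^ (m + 1 - p) = ρ ^ (m + 1) := by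
      rw [← pow_add]; congr 1; omega
    show HasDerivAt (fun y : ℝ => (-1 : ℝ) ^ (p + (m + 1)) * ((m+1).choose p : ℝ) * y ^ p * G f (m + 1 - p) y) _ ρ
    convert h3 using 1
    · ext t; ring
    · rw [mul_add]
      congr 1
      · ring
      · rw [show (-1 : ℝ) ^ (p + (m + 1)) * ((m+1).choose p : ℝ) * ρ ^ (m + 1) * (f ρ * Real.exp ρ)
            = (-1 : ℝ) ^ (p + (m + 1)) * ((m+1).choose p : ℝ) * ((ρ ^ p * ρ ^ (m + 1 - p)) * (f ρ * Real.exp ρ)) by rw [hpow]; ring]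
        ring
  have hval : (∑ p ∈ Finset.range (m + 2),
      ((-1 : ℝ) ^ (p + (m + 1)) * ((m+1).choose p : ℝ) * ((p : ℝ) * ρ ^ (p - 1)) * G f (m + 1 - p) ρ
        + (-1 : ℝ) ^ (p + (m + 1)) * ((m+1).choose p : ℝ) * ρ ^ (m + 1) * (f ρ * Real.exp ρ)))
      = ((m : ℝ) + 1) * H f m ρ := by
    rw [Finset.sum_add_distrib]
    have hB : ∑ p ∈ Finset.range (m + 2),
        (-1 : ℝ) ^ (p + (m + 1)) * ((m+1).choose p : ℝ) * ρ ^ (m + 1) * (f ρ * Real.exp ρ) = 0 := by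
      rw [show (∑ p ∈ Finset.range (m + 2),
          (-1 : ℝ) ^ (p + (m + 1)) * ((m+1).choose p : ℝ) * ρ ^ (m + 1) * (f ρ * Real.exp ρ))
        = (∑ p ∈ Finset.range (m + 2),
          (-1 : ℝ) ^ (p + (m + 1)) * ((m+1).choose p : ℝ)) * (ρ ^ (m + 1) * (f ρ * Real.exp ρ)) by
          rw [Finset.sum_mul]; exact Finset.sum_congr rfl fun p _ => by ring]
      rw [alt_sum_zero m, zero_mul]
    have hA : ∑ p ∈ Finset.range (m + 2),
        (-1 : ℝ) ^ (p + (m + 1)) * ((m+1).choose p : ℝ) * ((p : ℝ) * ρ ^ (p - 1)) * G f (m + 1 - p) ρ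
        = ((m : ℝ) + 1) * H f m ρ := by
      rw [Finset.sum_range_succ']
      simp only [Nat.cast_zero, zero_mul, mul_zero, add_zero]
      rw [H_eq hf m hρ.le, Finset.mul_sum]
      refine Finset.sum_congr rfl fun q hq => ?_
      have hqle : q ≤ m := by have := Finset.mem_range.mp hq; omega
      have hc : ((m : ℝ) + 1) * ((m.choose q : ℕ) : ℝ) =
          (((m+1).choose (q+1) : ℕ) : ℝ) * ((q : ℝ) + 1) := by
        exact_mod_cast congrArg (Nat.cast (R := ℝ)) (Nat.add_one_mul_choose_eq m q)
      have hidx : m + 1 - (q + 1) = m - q := by omega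
      have hsign : (-1 : ℝ) ^ (q + 1 + (m + 1)) = (-1 : ℝ) ^ (q + m) := by
        rw [show q + 1 + (m + 1) = (q + m) + 2 by omega, pow_add]; norm_num
      rw [hidx, hsign]
      push_cast
      push_cast at hc
      linear_combination ((-1 : ℝ) ^ (q + m) * ρ ^ q * G f (m - q) ρ) * hc.symm
    rw [hA, hB, add_zero]
  have hev : H f (m + 1) =ᶠ[nhds ρ] S := by
    filter_upwards [Ioi_mem_nhds hρ] with t ht
    exact H_eq hf (m + 1) (le_of_lt ht)
  exact (hval ▸ hS).congr_of_eventuallyEq hev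

lemma H_zero (m : ℕ) : H f m 0 = 0 := intervalIntegral.integral_same

lemma integral_H (hf : ContinuousOn f (Set.Ici 0)) (m : ℕ) {ρ : ℝ} (hρ : 0 ≤ ρ) :
    ∫ s in (0:ℝ)..ρ, H f m s = H f (m + 1) ρ / ((m : ℝ) + 1) := by
  have hm1 : ((m : ℝ) + 1) ≠ 0 := by positivity
  have hcont : ContinuousOn (fun s => H f (m + 1) s / ((m : ℝ) + 1)) (Set.Icc 0 ρ) :=
    (H_cont hf (m + 1) hρ).div_const _
  have hderiv : ∀ s ∈ Set.Ioo (0:ℝ) ρ,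
      HasDerivWithinAt (fun s => H f (m + 1) s / ((m : ℝ) + 1)) (H f m s) (Set.Ioi s) s := by
    intro s hs
    have h2 := (H_deriv hf m hs.1).div_const ((m : ℝ) + 1)
    have h3 : ((m : ℝ) + 1) * H f m s / ((m : ℝ) + 1) = H f m s := by field_simp
    rw [h3] at h2
    exact h2.hasDerivWithinAt
  have hint : IntervalIntegrable (H f m) MeasureTheory.volume 0 ρ := by
    apply ContinuousOn.intervalIntegrable
    rw [Set.uIcc_of_le hρ]
    exact H_cont hf m hρ
  have := intervalIntegral.integral_eq_sub_of_hasDeriv_right_of_le hρ hcont hderiv hint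
  rw [this, H_zero, zero_div, sub_zero]

lemma conv_eq (m : ℕ) (ρ : ℝ) :
    (∫ s in (0:ℝ)..ρ, f (ρ - s) * s ^ m * Real.exp (-s)) = Real.exp (-ρ) * H f m ρ := by
  have hpt : ∀ s ∈ Set.uIcc (0:ℝ) ρ, f (ρ - s) * s ^ m * Real.exp (-s) =
      Real.exp (-ρ) * (f (ρ - s) * (ρ - (ρ - s)) ^ m * Real.exp (ρ - s)) := by
    intro s _
    rw [sub_sub_cancel,
      show Real.exp (-s) = Real.exp (-ρ) * Real.exp (ρ - s) by
        rw [← Real.exp_add]; ring_nf]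
    ring
  rw [intervalIntegral.integral_congr hpt, intervalIntegral.integral_const_mul]
  congr 1
  have := intervalIntegral.integral_comp_sub_left
    (fun u => f u * (ρ - u) ^ m * Real.exp u) (a := 0) (b := ρ) ρ
  rw [sub_self, sub_zero] at this
  rw [this]
  rfl

end Stmt3Aux

open Stmt3Aux in
/-- Variation-of-parameters solution of the recursive linear ODEs
`x_j' = x_{j-1} - x_j` for `j > i`. -/
theorem stmt_3 (i : ℕ) (hi : 1 ≤ i) (x : ℕ → ℝ → ℝ)
    (hcont : ContinuousOn (x i) (Set.Ici 0))
    (hode : ∀ j, i < j → ∀ ρ : ℝ, HasDerivAt (x j) (x (j - 1) ρ - x j ρ) ρ) :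
    ∀ j, i < j → ∀ ρ : ℝ, 0 ≤ ρ →
      x j ρ = Real.exp (-ρ) *
          (∑ k ∈ Finset.Icc (i + 1) j, ρ ^ (j - k) / (Nat.factorial (j - k)) * x k 0)
        + (1 / (Nat.factorial (j - (i + 1)))) *
          ∫ s in (0 : ℝ)..ρ, x i (ρ - s) * s ^ (j - (i + 1)) * Real.exp (-s) := by
  have hf := hcont
  have hxc : ∀ j, i < j → Continuous (x j) := fun j hj =>
    continuous_iff_continuousAt.mpr fun s => (hode j hj s).differentiableAt.continuousAt
  have step : ∀ j, i < j → ∀ ρ : ℝ, 0 ≤ ρ →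
      Real.exp ρ * x j ρ - x j 0 = ∫ s in (0:ℝ)..ρ, Real.exp s * x (j - 1) s := by
    intro j hj ρ hρ
    have hderiv : ∀ s ∈ Set.uIcc (0:ℝ) ρ, HasDerivAt (fun t => Real.exp t * x j t)
        (Real.exp s * x (j - 1) s) s := by
      intro s _
      have h1 : HasDerivAt (fun t => Real.exp t * x j t)
          (Real.exp s * x j s + Real.exp s * (x (j - 1) s - x j s)) s :=
        (Real.hasDerivAt_exp s).mul (hode j hj s)
      convert h1 using 1
      ring
    have hint : IntervalIntegrable (fun s => Real.exp s * x (j - 1) s)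
        MeasureTheory.volume 0 ρ := by
      rcases eq_or_lt_of_le (Nat.succ_le_of_lt hj) with h | h
      · have hj1 : j - 1 = i := by omega
        rw [hj1]
        apply ContinuousOn.intervalIntegrable
        exact Real.continuous_exp.continuousOn.mul (hf.mono (uIcc_sub le_rfl hρ))
      · exact (Real.continuous_exp.mul (hxc (j - 1) (by omega))).intervalIntegrable 0 ρ
    have h2 := intervalIntegral.integral_eq_sub_of_hasDerivAt hderiv hint
    rw [h2, Real.exp_zero, one_mul]
  have key : ∀ j, i + 1 ≤ j → ∀ ρ : ℝ, 0 ≤ ρ →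
      Real.exp ρ * x j ρ =
        (∑ k ∈ Finset.Icc (i + 1) j, ρ ^ (j - k) / (Nat.factorial (j - k)) * x k 0)
        + (1 / (Nat.factorial (j - (i + 1)))) * H (x i) (j - (i + 1)) ρ := by
    intro j hj
    induction j, hj using Nat.le_induction with
    | base =>
      intro ρ hρ
      have hs := step (i + 1) (by omega) ρ hρ
      have hidx : i + 1 - 1 = i := by omega
      rw [hidx] at hs
      have hH : (∫ s in (0:ℝ)..ρ, Real.exp s * x i s) = H (x i) 0 ρ := by
        unfold Stmt3Aux.H
        apply intervalIntegral.integral_congr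
        intro u _
        simp
        ring
      rw [hH] at hs
      simp only [Finset.Icc_self, Finset.sum_singleton, Nat.sub_self, pow_zero,
        Nat.factorial_zero, Nat.cast_one]
      rw [one_div_one, one_mul, one_mul]
      linarith [hs]
    | succ j hij IH =>
      intro ρ hρ
      set m := j - (i + 1) with hm
      have hs := step (j + 1) (by omega) ρ hρ
      rw [Nat.add_sub_cancel] at hs
      have huIcc : Set.uIcc (0:ℝ) ρ = Set.Icc 0 ρ := Set.uIcc_of_le hρ
      have hcongr : (∫ s in (0:ℝ)..ρ, Real.exp s * x j s) =
          ∫ s in (0:ℝ)..ρ,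
            ((∑ k ∈ Finset.Icc (i + 1) j, s ^ (j - k) / (Nat.factorial (j - k)) * x k 0)
              + (1 / (Nat.factorial m)) * H (x i) m s) := by
        apply intervalIntegral.integral_congr
        intro s hsm
        rw [huIcc] at hsm
        exact IH s hsm.1
      rw [hcongr] at hs
      have hintS : ∀ k ∈ Finset.Icc (i + 1) j, IntervalIntegrable
          (fun s : ℝ => s ^ (j - k) / (Nat.factorial (j - k)) * x k 0)
          MeasureTheory.volume 0 ρ := by
        intro k _
        exact (((continuous_pow _).div_const _).mul continuous_const).intervalIntegrable 0 ρ
      have hintSum : IntervalIntegrable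
          (fun s : ℝ => ∑ k ∈ Finset.Icc (i + 1) j,
            s ^ (j - k) / (Nat.factorial (j - k)) * x k 0) MeasureTheory.volume 0 ρ :=
        (continuous_finset_sum _ fun k _ =>
          ((continuous_pow _).div_const _).mul continuous_const).intervalIntegrable 0 ρ
      have hintH : IntervalIntegrable (fun s => (1 / (Nat.factorial m : ℝ)) * H (x i) m s)
          MeasureTheory.volume 0 ρ := by
        apply IntervalIntegrable.const_mul
        apply ContinuousOn.intervalIntegrable
        rw [huIcc]
        exact H_cont hf m hρ
      rw [intervalIntegral.integral_add hintSum hintH,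
        intervalIntegral.integral_finset_sum hintS,
        intervalIntegral.integral_const_mul, integral_H hf m hρ] at hs
      have hterm : ∀ k ∈ Finset.Icc (i + 1) j,
          (∫ s in (0:ℝ)..ρ, s ^ (j - k) / (Nat.factorial (j - k)) * x k 0) =
            ρ ^ (j + 1 - k) / (Nat.factorial (j + 1 - k)) * x k 0 := by
        intro k hk
        have hkj : k ≤ j := (Finset.mem_Icc.mp hk).2
        rw [intervalIntegral.integral_mul_const, intervalIntegral.integral_div,
          integral_pow]
        have h1 : j + 1 - k = (j - k) + 1 := by omega
        rw [h1, Nat.factorial_succ]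
        have h2 : (0:ℝ) ^ ((j - k) + 1) = 0 := zero_pow (Nat.succ_ne_zero _)
        rw [h2, sub_zero]
        have h3 : ((j - k : ℕ) : ℝ) + 1 ≠ 0 := by positivity
        have h4 : ((Nat.factorial (j - k) : ℕ) : ℝ) ≠ 0 := by
          exact_mod_cast (Nat.factorial_ne_zero (j - k))
        push_cast
        field_simp
      rw [Finset.sum_congr rfl hterm] at hs
      have hmm : j + 1 - (i + 1) = m + 1 := by omega
      rw [hmm]
      rw [Finset.sum_Icc_succ_top (by omega : i + 1 ≤ j + 1)]
      have hlast : ρ ^ (j + 1 - (j + 1)) / (Nat.factorial (j + 1 - (j + 1))) * x (j + 1) 0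
          = x (j + 1) 0 := by simp
      rw [hlast]
      have hfac : (1 : ℝ) / (Nat.factorial (m + 1)) * H (x i) (m + 1) ρ
          = 1 / (Nat.factorial m) * (H (x i) (m + 1) ρ / ((m : ℝ) + 1)) := by
        have h6 : ((Nat.factorial (m + 1) : ℕ) : ℝ) = ((m : ℝ) + 1) * (Nat.factorial m : ℝ) := by
          rw [Nat.factorial_succ]; push_cast; ring
        rw [h6, one_div_mul_eq_div, one_div_mul_eq_div, div_div]
      rw [hfac]
      linarith [hs]
  intro j hj ρ hρ
  have hk := key j hj ρ hρ
  have hexp : x j ρ = Real.exp (-ρ) * (Real.exp ρ * x j ρ) := by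
    rw [← mul_assoc, ← Real.exp_add, neg_add_cancel, Real.exp_zero, one_mul]
  rw [hexp, hk, conv_eq (j - (i + 1)) ρ]
  ring
end

section
/- Let c_i : [0,∞) → ℝ be continuous and bounded, and for j ≥ i+1 define c_j(ρ) = e^{-ρ}·Σ_{k=i+1}^{j} (ρ^{j-k}/(j-k)!)·c_k(0) + (1/(j-(i+1))!)·∫_0^ρ c_i(ρ-s)·s^{j-(i+1)}·e^{-s} ds, where Σ_{k=i+1}^∞ |c_k(0)| < ∞. Then for each ρ ≥ 0 the series Σ_{j=i+1}^∞ c_j(ρ) converges and equals Σ_{k=i+1}^∞ c_k(0) - c_i(0) + c_i(0) + ∫_0^ρ c_i(s) ds, i.e. Σ_{j=i+1}^∞ c_j(ρ) = Σ_{k=i+1}^∞ c_k(0) + ∫_0^ρ c_i(s) ds. -/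
open Finset intervalIntegral

/-- Summing the explicit solutions `c_j` (for `j > i`) of `c_j' = c_{j-1} - c_j`:
the series converges and equals `∑_{k>i} c_k(0) + ∫_0^ρ c_i(s) ds`. -/
theorem stmt_4 (i : ℕ) (hi : 1 ≤ i) (ci : ℝ → ℝ) (a : ℕ → ℝ)
    (hcont : Continuous ci) (hbdd : ∃ M : ℝ, ∀ s : ℝ, 0 ≤ s → |ci s| ≤ M)
    (hsum : Summable fun k => |a k|)
    (c : ℕ → ℝ → ℝ)
    (hc : ∀ j, i + 1 ≤ j → ∀ ρ : ℝ, c j ρ =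
      Real.exp (-ρ) *
          (∑ k ∈ Finset.Icc (i + 1) j, ρ ^ (j - k) / (Nat.factorial (j - k)) * a k)
        + (1 / (Nat.factorial (j - (i + 1)))) *
          ∫ s in (0 : ℝ)..ρ, ci (ρ - s) * s ^ (j - (i + 1)) * Real.exp (-s)) :
    ∀ ρ : ℝ, 0 ≤ ρ →
      HasSum (fun m : ℕ => c (i + 1 + m) ρ)
        ((∑' m : ℕ, a (i + 1 + m)) + ∫ s in (0 : ℝ)..ρ, ci s) := by
  obtain ⟨M, hM⟩ := hbdd
  intro ρ hρ
  have hexp : ∀ x : ℝ, HasSum (fun n : ℕ => x ^ n / n.factorial) (Real.exp x) := by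
    intro x
    rw [Real.exp_eq_exp_ℝ]
    exact NormedSpace.expSeries_div_hasSum_exp x
  -- the shifted coefficient sequence
  have hbsum : Summable fun l : ℕ => ‖a (i + 1 + l)‖ := by
    have := hsum.comp_injective (f := fun k => |a k|)
      (i := fun l : ℕ => i + 1 + l) (add_right_injective (i+1))
    simp only [Real.norm_eq_abs]
    exact this
  have hgsum : Summable fun n : ℕ => ‖(ρ ^ n / n.factorial : ℝ)‖ := by
    have := Real.summable_pow_div_factorial |ρ| 
    apply this.congr
    intro n
    simp [abs_div, abs_pow, Nat.abs_cast]
  -- Part 1 : Cauchy product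
  have h1 : HasSum
      (fun m : ℕ => Real.exp (-ρ) *
        ∑ k ∈ range (m + 1), a (i + 1 + k) * (ρ ^ (m - k) / (m - k).factorial))
      (∑' m : ℕ, a (i + 1 + m)) := by
    have hC := (hasSum_sum_range_mul_of_summable_norm hbsum hgsum).mul_left (Real.exp (-ρ))
    have hg : (∑' n : ℕ, (ρ ^ n / n.factorial : ℝ)) = Real.exp ρ := (hexp ρ).tsum_eq
    rw [hg] at hC
    have : Real.exp (-ρ) * ((∑' n : ℕ, a (i + 1 + n)) * Real.exp ρ)
        = ∑' m : ℕ, a (i + 1 + m) := by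
      rw [mul_comm (∑' n : ℕ, a (i + 1 + n)) (Real.exp ρ), ← mul_assoc,
        ← Real.exp_add]
      simp
    rwa [this] at hC
  -- Part 2 : exchanging sum and integral
  have h2 : HasSum
      (fun m : ℕ => ∫ s in (0:ℝ)..ρ, ci (ρ - s) * (s ^ m / m.factorial) * Real.exp (-s))
      (∫ s in (0:ℝ)..ρ, ci s) := by
    have key := intervalIntegral.hasSum_integral_of_dominated_convergence
      (μ := MeasureTheory.volume) (a := (0:ℝ)) (b := ρ)
      (F := fun m s => ci (ρ - s) * (s ^ m / m.factorial) * Real.exp (-s))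
      (f := fun s => ci (ρ - s))
      (bound := fun m s => M * (s ^ m / m.factorial) * Real.exp (-s))
      (fun m => (Continuous.mul (Continuous.mul (hcont.comp (by continuity))
        (by continuity)) (by continuity)).aestronglyMeasurable)
      (fun m => Filter.Eventually.of_forall (fun t ht => ?_))
      (Filter.Eventually.of_forall (fun t ht => ?_))
      ?_
      (Filter.Eventually.of_forall (fun t ht => ?_))
    · have : (∫ s in (0:ℝ)..ρ, ci (ρ - s)) = ∫ s in (0:ℝ)..ρ, ci s := by
        have := intervalIntegral.integral_comp_sub_left (a := (0:ℝ)) (b := ρ) ci ρ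
        simpa using this
      rwa [this] at key
    · -- pointwise bound
      rw [Set.uIoc_of_le hρ] at ht
      have ht0 : 0 ≤ t := le_of_lt ht.1
      have htρ : 0 ≤ ρ - t := by linarith [ht.2]
      have h1 : |ci (ρ - t)| ≤ M := hM _ htρ
      have h2' : (0:ℝ) ≤ t ^ m / m.factorial := by positivity
      have h3 : (0:ℝ) ≤ Real.exp (-t) := (Real.exp_pos _).le
      rw [Real.norm_eq_abs, abs_mul, abs_mul, abs_of_nonneg h2', abs_of_nonneg h3]
      have : |ci (ρ - t)| * (t ^ m / m.factorial) ≤ M * (t ^ m / m.factorial) :=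
        mul_le_mul_of_nonneg_right h1 h2'
      exact mul_le_mul_of_nonneg_right this h3
    · -- summability of the bound
      exact (((hexp t).mul_left M).mul_right (Real.exp (-t))).summable
    · -- integrability of the summed bound
      have heq : (fun t : ℝ => ∑' m : ℕ, M * (t ^ m / m.factorial) * Real.exp (-t))
          = fun _ => M := by
        funext t
        rw [(((hexp t).mul_left M).mul_right (Real.exp (-t))).tsum_eq]
        rw [mul_assoc, ← Real.exp_add]
        simp
      rw [heq]
      exact intervalIntegrable_const
    · -- pointwise limit
      have := ((hexp t).mul_left (ci (ρ - t))).mul_right (Real.exp (-t))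
      have he : ci (ρ - t) * Real.exp t * Real.exp (-t) = ci (ρ - t) := by
        rw [mul_assoc, ← Real.exp_add]
        simp
      rw [he] at this
      exact this
  -- rewrite the summand
  have hsummand : ∀ m : ℕ, c (i + 1 + m) ρ =
      Real.exp (-ρ) *
        (∑ k ∈ range (m + 1), a (i + 1 + k) * (ρ ^ (m - k) / (m - k).factorial))
      + ∫ s in (0:ℝ)..ρ, ci (ρ - s) * (s ^ m / m.factorial) * Real.exp (-s) := by
    intro m
    rw [hc (i + 1 + m) (by omega) ρ]
    have hIcc : Finset.Icc (i + 1) (i + 1 + m) = Finset.Ico (i + 1) (i + 1 + m + 1) := by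
      rw [Finset.Ico_add_one_right_eq_Icc]
    have hsum1 : (∑ k ∈ Finset.Icc (i + 1) (i + 1 + m),
        ρ ^ (i + 1 + m - k) / ((i + 1 + m - k).factorial : ℝ) * a k)
        = ∑ k ∈ range (m + 1), a (i + 1 + k) * (ρ ^ (m - k) / (m - k).factorial) := by
      rw [hIcc, Finset.sum_Ico_eq_sum_range]
      have hm : i + 1 + m + 1 - (i + 1) = m + 1 := by omega
      rw [hm]
      refine Finset.sum_congr rfl (fun l hl => ?_)
      have : i + 1 + m - (i + 1 + l) = m - l := by omega
      rw [this]
      ring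
    have hfac : i + 1 + m - (i + 1) = m := by omega
    rw [hsum1, hfac, ← intervalIntegral.integral_const_mul]
    congr 1
    refine intervalIntegral.integral_congr (fun s _ => ?_)
    have hf0 : (m.factorial : ℝ) ≠ 0 := Nat.cast_ne_zero.mpr m.factorial_ne_zero
    field_simp
  have hfun : (fun m : ℕ => c (i + 1 + m) ρ) = fun m =>
      Real.exp (-ρ) *
        (∑ k ∈ range (m + 1), a (i + 1 + k) * (ρ ^ (m - k) / (m - k).factorial))
      + ∫ s in (0:ℝ)..ρ, ci (ρ - s) * (s ^ m / m.factorial) * Real.exp (-s) :=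
    funext hsummand
  rw [hfun]
  exact h1.add h2
end

section
/- Solving the quasi-steady-state algebraic system c_1² - c_1c_2 - c_2 + c_3 = 0, c_1c_{j-1} - c_1c_j - c_j + c_{j+1} = 0 for 2 < j < i, and c_1c_{i-1} - c_1c_i - c_i = 0 for the unknowns c_2,...,c_i in terms of c_1 > 0 yields the unique solution c_j = (Σ_{k=1}^{i-j+1} c_1^{k+j-1}) / (Σ_{k=1}^{i} c_1^{k-1}) for j = 2, ..., i. -/
open Finset

/-- The quasi-steady-state linear system for `c_2, …, c_i` in terms of `c_1 > 0`
has the unique solution `c_j = (∑_{k=1}^{i-j+1} c_1^{k+j-1})/(∑_{k=1}^i c_1^{k-1})`. -/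
theorem stmt_7 (i : ℕ) (hi : 2 ≤ i) (c : ℕ → ℝ) (hc1 : 0 < c 1) :
    ((∀ j, 2 ≤ j → j < i → c 1 * c (j - 1) - c 1 * c j - c j + c (j + 1) = 0) ∧
      c 1 * c (i - 1) - c 1 * c i - c i = 0)
    ↔ (∀ j ∈ Finset.Icc 2 i, c j =
        (∑ k ∈ Finset.Icc 1 (i - j + 1), (c 1) ^ (k + j - 1)) /
        (∑ k ∈ Finset.Icc 1 i, (c 1) ^ (k - 1))) := by
  set x := c 1 with hx1
  have hx : 0 < x := hc1
  set S : ℕ → ℝ := fun n => ∑ k ∈ Finset.range n, x ^ k with hSdef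
  have hSsucc : ∀ n, S (n + 1) = S n + x ^ n := fun n => Finset.sum_range_succ _ n
  have hSpos : ∀ n, 0 < S (n + 1) := by
    intro n
    induction n with
    | zero => simp [hSdef]
    | succ n ih => rw [hSsucc]; exact add_pos ih (pow_pos hx _)
  have hSi : 0 < S i := by
    obtain ⟨n, rfl⟩ : ∃ n, i = n + 1 := ⟨i - 1, by omega⟩
    exact hSpos n
  have hSne : S i ≠ 0 := ne_of_gt hSi
  have hSrec2 : ∀ l, S (l + 2) = (x + 1) * S (l + 1) - x * S l := by
    intro l; rw [hSsucc (l + 1), hSsucc l]; ring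
  set F : ℕ → ℝ := fun j => x ^ j * S (i - j + 1) / S i with hFdef
  -- bracket identity
  have hbr : ∀ m : ℕ, S (m + 3) - (x + 1) * S (m + 2) + x * S (m + 1) = 0 := by
    intro m; rw [hSsucc (m + 2), hSsucc (m + 1)]; ring
  have hF1 : F 1 = x := by
    simp only [hFdef]
    rw [show i - 1 + 1 = i by omega, pow_one, mul_div_assoc, div_self hSne, mul_one]
  -- recurrence for F (index-shifted to avoid subtraction)
  have hFrec : ∀ l, 2 + l < i →
      x * F (l + 1) - x * F (l + 2) - F (l + 2) + F (l + 3) = 0 := by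
    intro l hl
    obtain ⟨m, rfl⟩ : ∃ m, i = l + m + 3 := ⟨i - l - 3, by omega⟩
    simp only [hFdef]
    rw [show l + m + 3 - (l + 1) + 1 = m + 3 by omega,
      show l + m + 3 - (l + 2) + 1 = m + 2 by omega,
      show l + m + 3 - (l + 3) + 1 = m + 1 by omega]
    have h := hbr m
    have hne : S (l + m + 3) ≠ 0 := ne_of_gt (hSpos (l + m + 2))
    linear_combination (x ^ (l + 2) / S (l + m + 3)) * h
  have hFlast : x * F (i - 1) - x * F i - F i = 0 := by
    obtain ⟨n, rfl⟩ : ∃ n, i = n + 2 := ⟨i - 2, by omega⟩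
    simp only [hFdef, show n + 2 - 1 = n + 1 by omega]
    rw [show n + 2 - (n + 1) + 1 = 2 by omega, show n + 2 - (n + 2) + 1 = 1 by omega]
    have h1 : S 1 = 1 := by simp [hSdef]
    have h2 : S 2 = 1 + x := by
      rw [show (2 : ℕ) = 1 + 1 from rfl, hSsucc, h1]; ring
    rw [h1, h2]
    field_simp
    ring
  -- the stated formula equals F j
  have hform : ∀ j, 1 ≤ j → j ≤ i →
      ((∑ k ∈ Finset.Icc 1 (i - j + 1), x ^ (k + j - 1)) /
        (∑ k ∈ Finset.Icc 1 i, x ^ (k - 1))) = F j := by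
    intro j hj1 hji
    have hd : (∑ k ∈ Finset.Icc 1 i, x ^ (k - 1)) = S i := by
      rw [show Finset.Icc 1 i = Finset.Ico 1 (i + 1) by rw [Finset.Ico_add_one_right_eq_Icc],
        Finset.sum_Ico_eq_sum_range]
      simp only [hSdef]
      apply Finset.sum_congr (by congr 1)
      intro k _
      congr 1
      omega
    have hn : (∑ k ∈ Finset.Icc 1 (i - j + 1), x ^ (k + j - 1)) = x ^ j * S (i - j + 1) := by
      rw [show Finset.Icc 1 (i - j + 1) = Finset.Ico 1 (i - j + 1 + 1) by rw [Finset.Ico_add_one_right_eq_Icc],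
        Finset.sum_Ico_eq_sum_range]
      simp only [hSdef, Finset.mul_sum]
      apply Finset.sum_congr (by congr 1)
      intro k _
      rw [show 1 + k + j - 1 = j + k by omega, pow_add]
    rw [hd, hn, hFdef]
  constructor
  · -- uniqueness direction
    rintro ⟨hmid, hlast⟩
    set d := c 2 - F 2 with hdd
    have key : ∀ j, 1 ≤ j → j ≤ i → c j = F j + d * S (j - 1) := by
      intro j
      induction j using Nat.strong_induction_on with
      | _ j ih =>
        intro hj1 hji
        rcases Nat.lt_or_ge j 3 with h3 | h3
        · interval_cases j
          · have hS0 : S 0 = 0 := by simp [hSdef]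
            rw [show (1 : ℕ) - 1 = 0 from rfl, hS0, hF1]; ring
          · have hS1 : S 1 = 1 := by simp [hSdef]
            rw [show (2 : ℕ) - 1 = 1 from rfl, hS1, hdd]; ring
        · obtain ⟨l, rfl⟩ : ∃ l, j = l + 3 := ⟨j - 3, by omega⟩
          have e1 := ih (l + 2) (by omega) (by omega) (by omega)
          have e2 := ih (l + 1) (by omega) (by omega) (by omega)
          rw [show l + 2 - 1 = l + 1 by omega] at e1
          rw [show l + 1 - 1 = l by omega] at e2
          have heq := hmid (l + 2) (by omega) (by omega)
          rw [show l + 2 - 1 = l + 1 by omega] at heq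
          have hFr := hFrec l (by omega)
          have hSr := hSrec2 l
          rw [show l + 3 - 1 = l + 2 by omega]
          rw [e1, e2] at heq
          linear_combination heq - hFr - d * hSr
    have hd0 : d = 0 := by
      obtain ⟨n, rfl⟩ : ∃ n, i = n + 2 := ⟨i - 2, by omega⟩
      have k1 := key (n + 1) (by omega) (by omega)
      have k2 := key (n + 2) (by omega) (by omega)
      rw [show n + 1 - 1 = n by omega] at k1
      rw [show n + 2 - 1 = n + 1 by omega] at k2
      rw [show n + 2 - 1 = n + 1 by omega] at hlast
      rw [k1, k2] at hlast
      have hFl := hFlast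
      rw [show n + 2 - 1 = n + 1 by omega] at hFl
      have hSr := hSrec2 n
      have : d * S (n + 2) = 0 := by nlinarith [hlast, hFl, hSr]
      have hp := hSpos (n + 1)
      rcases mul_eq_zero.mp this with h | h
      · exact h
      · exact absurd h (ne_of_gt hp)
    intro j hj
    rw [Finset.mem_Icc] at hj
    have := key j (by omega) hj.2
    rw [hd0] at this
    rw [this, hform j (by omega) hj.2]
    ring
  · -- the formula satisfies the system
    intro h
    have hc : ∀ j, 1 ≤ j → j ≤ i → c j = F j := by
      intro j hj1 hji
      rcases Nat.lt_or_ge j 2 with h2 | h2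
      · have : j = 1 := by omega
        rw [this, hF1]
      · rw [h j (Finset.mem_Icc.mpr ⟨h2, hji⟩), hform j hj1 hji]
    constructor
    · intro j hj2 hji
      obtain ⟨l, rfl⟩ : ∃ l, j = l + 2 := ⟨j - 2, by omega⟩
      rw [show l + 2 - 1 = l + 1 by omega]
      rw [hc (l + 1) (by omega) (by omega), hc (l + 2) (by omega) (by omega),
        hc (l + 3) (by omega) (by omega)]
      exact hFrec l (by omega)
    · rw [hc i (by omega) le_rfl, hc (i - 1) (by omega) (by omega)]
      exact hFlast
end

section
/- For i ≥ 2, 2 ≤ j ≤ i, and 0 < c_1 < 1, the quasi-steady-state expression c_j = (Σ_{k=1}^{i-j+1} c_1^{k+j-1})/(Σ_{k=1}^{i} c_1^{k-1}) admits, for every n ≥ 1, the expansion c_j = c_1^j + Σ_{k=1}^{n} (-c_1^{ki+1} + c_1^{ki+j}) + O(c_1^{(n+1)i+1}) as c_1 → 0; more precisely, |c_j - c_1^j - Σ_{k=1}^{n}(-c_1^{ki+1} + c_1^{ki+j})| ≤ C·c_1^{(n+1)i+1} for some constant C and all sufficiently small c_1 > 0. -/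
open Finset

/-- Power-series expansion of the quasi-steady-state expression:
`c_j = c_1^j + ∑_{k=1}^n (-c_1^{ki+1} + c_1^{ki+j}) + O(c_1^{(n+1)i+1})` as `c_1 → 0⁺`. -/
theorem stmt_8 (i j n : ℕ) (hi : 2 ≤ i) (hj2 : 2 ≤ j) (hji : j ≤ i) (hn : 1 ≤ n) :
    ∃ C : ℝ, ∃ δ : ℝ, 0 < δ ∧ δ ≤ 1 ∧ ∀ c1 : ℝ, 0 < c1 → c1 < δ →
      |(∑ k ∈ Finset.Icc 1 (i - j + 1), c1 ^ (k + j - 1)) /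
          (∑ k ∈ Finset.Icc 1 i, c1 ^ (k - 1))
        - c1 ^ j - ∑ k ∈ Finset.Icc 1 n, (-c1 ^ (k * i + 1) + c1 ^ (k * i + j))|
      ≤ C * c1 ^ ((n + 1) * i + 1) := by
  refine ⟨2, 1/2, by norm_num, by norm_num, ?_⟩
  intro c hc hc2
  have hc1 : c < 1 := by linarith
  have hcne : c - 1 ≠ 0 := by intro h; nlinarith
  set x : ℝ := c ^ i with hxdef
  set y : ℝ := c ^ (i - j + 1) with hydef
  set a : ℝ := c ^ j with hadef
  set b : ℝ := c ^ (j - 1) with hbdef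
  clear_value x y a b
  have hx0 : 0 < x := hxdef ▸ pow_pos hc i
  have hx1 : x < 1 := hxdef ▸ pow_lt_one₀ (le_of_lt hc) hc1 (by omega)
  have hxle : x ≤ c ^ 2 := by
    rw [hxdef]; exact pow_le_pow_of_le_one (le_of_lt hc) (le_of_lt hc1) hi
  have hxhalf : x < 1/2 := by nlinarith
  have hxne : x - 1 ≠ 0 := by intro h; nlinarith
  have hab : a = b * c := by
    rw [hadef, hbdef, ← pow_succ]
    congr 1; omega
  have hay : a * y = c * x := by
    rw [hadef, hydef, hxdef, ← pow_add, ← pow_succ']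
    congr 1; omega
  have hb1 : b ≤ 1 := by
    rw [hbdef]; exact pow_le_one₀ (le_of_lt hc) (le_of_lt hc1)
  have hb0 : 0 < b := hbdef ▸ pow_pos hc _
  -- closed form for the denominator sum
  have hS2 : ∑ k ∈ Icc 1 i, c ^ (k - 1) = (x - 1) / (c - 1) := by
    have h1 : ∑ k ∈ Icc 1 i, c ^ (k - 1) = ∑ k ∈ range i, c ^ k := by
      rw [← Finset.Ico_add_one_right_eq_Icc, Finset.sum_Ico_eq_sum_range,
        show i + 1 - 1 = i from rfl]
      refine Finset.sum_congr rfl fun t _ => ?_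
      congr 1; omega
    rw [h1, geom_sum_eq (by intro h; apply hcne; linarith), ← hxdef]
  -- closed form for the numerator sum
  have hS1 : ∑ k ∈ Icc 1 (i - j + 1), c ^ (k + j - 1) = a * ((y - 1) / (c - 1)) := by
    have h1 : ∑ k ∈ Icc 1 (i - j + 1), c ^ (k + j - 1)
        = ∑ t ∈ range (i - j + 1), (a * c ^ t) := by
      rw [← Finset.Ico_add_one_right_eq_Icc, Finset.sum_Ico_eq_sum_range,
        show i - j + 1 + 1 - 1 = i - j + 1 from rfl]
      refine Finset.sum_congr rfl fun t _ => ?_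
      rw [hadef, ← pow_add]
      congr 1; omega
    rw [h1, ← Finset.mul_sum, geom_sum_eq (by intro h; apply hcne; linarith), ← hydef]
  -- closed form for the correction sum
  have hS3 : ∑ k ∈ Icc 1 n, (-c ^ (k * i + 1) + c ^ (k * i + j))
      = (a - c) * (x * ((x ^ n - 1) / (x - 1))) := by
    have h1 : ∑ k ∈ Icc 1 n, (-c ^ (k * i + 1) + c ^ (k * i + j))
        = ∑ t ∈ range n, ((a - c) * (x * x ^ t)) := by
      rw [← Finset.Ico_add_one_right_eq_Icc, Finset.sum_Ico_eq_sum_range,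
        show n + 1 - 1 = n from rfl]
      refine Finset.sum_congr rfl fun t _ => ?_
      have e1 : c ^ ((1 + t) * i + 1) = x * x ^ t * c := by
        rw [hxdef, ← pow_mul, ← pow_add, ← pow_succ]
        congr 1; ring
      have e2 : c ^ ((1 + t) * i + j) = x * x ^ t * a := by
        rw [hadef, hxdef, ← pow_mul, ← pow_add, ← pow_add]
        congr 1; ring
      rw [e1, e2]; ring
    rw [h1, ← Finset.mul_sum, ← Finset.mul_sum,
      geom_sum_eq (by intro h; apply hxne; linarith)]
  rw [hS1, hS2, hS3]
  -- exact form of the remainder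
  have key : a * ((y - 1) / (c - 1)) / ((x - 1) / (c - 1)) - a
      - (a - c) * (x * ((x ^ n - 1) / (x - 1)))
      = c * (1 - b) * x ^ (n + 1) / (x - 1) := by
    have hnum : a * (y - 1) - a * (x - 1) - (a - c) * x * (x ^ n - 1)
        = c * (1 - b) * x ^ (n + 1) := by
      linear_combination hay - x * x ^ n * hab
    field_simp
    linear_combination hay - (x * x ^ n) * hab
  rw [key]
  have hrhs : c ^ ((n + 1) * i + 1) = c * x ^ (n + 1) := by
    rw [hxdef, ← pow_mul, ← pow_succ']
    congr 1; ring
  rw [hrhs]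
  have h1 : c * (1 - b) * x ^ (n + 1) / (x - 1)
      = -(c * (1 - b) * x ^ (n + 1) / (1 - x)) := by
    rw [← div_neg]; ring_nf
  rw [h1, abs_neg, abs_of_nonneg (div_nonneg
    (mul_nonneg (mul_nonneg hc.le (by linarith)) (by positivity)) (by linarith))]
  have hxp : (0:ℝ) < x ^ (n + 1) := pow_pos hx0 _
  rw [div_le_iff₀ (by linarith)]
  nlinarith [mul_pos hc hxp]
end

section
/- Let g_2, ..., g_i, g_w be formal power series in c_1 with zero constant and linear terms that satisfy the centre-manifold invariance equations: g_2'·(g_w - 2c_1²) = c_1² - c_1g_2 + c_1g_3 - g_2 + g_3; g_j'·(g_w - 2c_1²) = c_1g_{j-1} - c_1g_j - g_j + g_{j+1} for 2 < j < i; g_i'·(g_w - 2c_1²) = c_1g_{i-1} - c_1g_i - g_i. Then for each 2 ≤ j ≤ i, the lowest-order term of g_j is c_1^j, i.e. the coefficient of c_1^k in g_j vanishes for k < j and the coefficient of c_1^j equals 1. -/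
open PowerSeries

/-- For formal power series `g_2, …, g_i, g_w` (no constant or linear terms)
satisfying the centre-manifold invariance equations (with the convention
`g_1 = X` and `g_{i+1} = 0`), the lowest-order term of `g_j` is `c_1^j`:
the coefficient of `c_1^k` vanishes for `k < j` and the coefficient of
`c_1^j` equals `1`. -/
theorem stmt_15 (i : ℕ) (hi : 2 ≤ i)
    (g : ℕ → PowerSeries ℝ) (gw : PowerSeries ℝ)
    (hg1 : g 1 = PowerSeries.X)
    (hlow : ∀ j ∈ Finset.Icc 2 i,
      PowerSeries.coeff 0 (g j) = 0 ∧ PowerSeries.coeff 1 (g j) = 0)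
    (hwlow : PowerSeries.coeff 0 gw = 0 ∧ PowerSeries.coeff 1 gw = 0)
    (heq : ∀ j, 2 ≤ j → j < i →
      (derivative ℝ (g j)) * (gw - 2 * PowerSeries.X ^ 2)
        = PowerSeries.X * g (j - 1) - PowerSeries.X * g j - g j + g (j + 1))
    (heqi : (derivative ℝ (g i)) * (gw - 2 * PowerSeries.X ^ 2)
        = PowerSeries.X * g (i - 1) - PowerSeries.X * g i - g i) :
    ∀ j ∈ Finset.Icc 2 i,
      (∀ k < j, PowerSeries.coeff k (g j) = 0) ∧ PowerSeries.coeff j (g j) = 1 := by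
  have main : ∀ k : ℕ, ∀ j, 2 ≤ j → j ≤ i →
      (k < j → PowerSeries.coeff k (g j) = 0) ∧
      (k = j → PowerSeries.coeff k (g j) = 1) := by
    intro k
    induction k using Nat.strong_induction_on with
    | _ k IH =>
    rcases Nat.lt_or_ge k 2 with hk2 | hk2
    · intro j hj2 hji
      refine ⟨fun _ => ?_, fun hkj => by omega⟩
      interval_cases k
      · exact (hlow j (Finset.mem_Icc.mpr ⟨hj2, hji⟩)).1
      · exact (hlow j (Finset.mem_Icc.mpr ⟨hj2, hji⟩)).2
    -- now k ≥ 2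
    have hsmall : ∀ m j, 2 ≤ j → j ≤ i → m < k → m < j →
        PowerSeries.coeff m (g j) = 0 := by
      intro m j hj2 hji hmk hmj
      rcases Nat.lt_or_ge m 2 with hm | hm
      · interval_cases m
        · exact (hlow j (Finset.mem_Icc.mpr ⟨hj2, hji⟩)).1
        · exact (hlow j (Finset.mem_Icc.mpr ⟨hj2, hji⟩)).2
      · exact (IH m hmk j hj2 hji).1 hmj
    have hLHS : ∀ j, 2 ≤ j → j ≤ i → k ≤ j →
        PowerSeries.coeff k
          (derivative ℝ (g j) * (gw - 2 * PowerSeries.X ^ 2)) = 0 := by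
      intro j hj2 hji hkj
      rw [coeff_mul]
      apply Finset.sum_eq_zero
      intro p hp
      rw [Finset.HasAntidiagonal.mem_antidiagonal] at hp
      rcases Nat.lt_or_ge p.2 2 with h2 | h2
      · have hz : PowerSeries.coeff p.2 (gw - 2 * PowerSeries.X ^ 2) = 0 := by
          interval_cases hp2 : p.2 <;>
            rw [map_sub, two_mul, map_add, coeff_X_pow] <;>
            simp [hwlow.1, hwlow.2]
        rw [hz, mul_zero]
      · have hp1 : p.1 + 1 < k := by omega
        have hz : PowerSeries.coeff p.1 (derivative ℝ (g j)) = 0 := by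
          rw [coeff_derivative, hsmall (p.1 + 1) j hj2 hji hp1 (by omega), zero_mul]
        rw [hz, zero_mul]
    obtain ⟨m, rfl⟩ : ∃ m, k = m + 2 := ⟨k - 2, by omega⟩
    -- off-diagonal at the top index i
    have htop : m + 2 < i → PowerSeries.coeff (m + 2) (g i) = 0 := by
      intro hki
      have E := congrArg (PowerSeries.coeff (m + 2)) heqi
      rw [hLHS i (by omega) le_rfl (by omega)] at E
      rw [map_sub, map_sub] at E
      rw [show m + 2 = (m + 1) + 1 from rfl, coeff_succ_X_mul, coeff_succ_X_mul] at E
      rw [hsmall (m + 1) (i - 1) (by omega) (by omega) (by omega) (by omega)] at E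
      rw [hsmall (m + 1) i (by omega) le_rfl (by omega) (by omega)] at E
      linarith
    have hoff : ∀ t j, 2 ≤ j → j ≤ i → i ≤ j + t → m + 2 < j →
        PowerSeries.coeff (m + 2) (g j) = 0 := by
      intro t
      induction t with
      | zero =>
        intro j hj2 hji hit hkj
        have : j = i := by omega
        subst this; exact htop hkj
      | succ t iht =>
        intro j hj2 hji hit hkj
        rcases eq_or_lt_of_le hji with rfl | hlt
        · exact htop hkj
        · have E := congrArg (PowerSeries.coeff (m + 2)) (heq j hj2 hlt)
          rw [hLHS j hj2 hji (by omega)] at E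
          rw [map_add, map_sub, map_sub] at E
          rw [show m + 2 = (m + 1) + 1 from rfl, coeff_succ_X_mul, coeff_succ_X_mul] at E
          rw [hsmall (m + 1) (j - 1) (by omega) (by omega) (by omega) (by omega)] at E
          rw [hsmall (m + 1) j hj2 hji (by omega) (by omega)] at E
          rw [iht (j + 1) (by omega) (by omega) (by omega) (by omega)] at E
          linarith
    intro j hj2 hji
    constructor
    · intro hkj
      exact hoff (i - j) j hj2 hji (by omega) hkj
    · intro hkj
      subst hkj
      have hprev : PowerSeries.coeff (m + 1) (g (m + 1)) = 1 := by
        rcases Nat.lt_or_ge (m + 1) 2 with h1 | h1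
        · have hm : m = 0 := by omega
          subst hm
          rw [hg1]
          simp
        · exact (IH (m + 1) (by omega) (m + 1) h1 (by omega)).2 rfl
      rcases eq_or_lt_of_le hji with heqI | hlt
      · subst heqI
        have E := congrArg (PowerSeries.coeff (m + 2)) heqi
        rw [hLHS (m + 2) (by omega) le_rfl le_rfl] at E
        rw [map_sub, map_sub] at E
        rw [show m + 2 = (m + 1) + 1 from rfl, coeff_succ_X_mul, coeff_succ_X_mul] at E
        rw [show m + 2 - 1 = m + 1 from rfl, hprev] at E
        rw [hsmall (m + 1) (m + 2) (by omega) le_rfl (by omega) (by omega)] at E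
        linarith
      · have E := congrArg (PowerSeries.coeff (m + 2)) (heq (m + 2) (by omega) hlt)
        rw [hLHS (m + 2) (by omega) hji le_rfl] at E
        rw [map_add, map_sub, map_sub] at E
        rw [show m + 2 = (m + 1) + 1 from rfl, coeff_succ_X_mul, coeff_succ_X_mul] at E
        rw [show m + 2 - 1 = m + 1 from rfl, hprev] at E
        rw [hsmall (m + 1) (m + 2) (by omega) hji (by omega) (by omega)] at E
        rw [hoff (i - (m + 3)) (m + 3) (by omega) (by omega) (by omega) (by omega)] at E
        linarith
  intro j hj
  rw [Finset.mem_Icc] at hj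
  exact ⟨fun k hk => (main k j hj.1 hj.2).1 hk, (main j j hj.1 hj.2).2 rfl⟩
end
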